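/- arXiv:2601.01174 — 2 statements merged into one kernel-verified Lean document; each statement's English description precedes it below -/
import Mathlib

section
/- Suppose the scalar functions A, B, C : ℝ → ℝ satisfy A' = B, B' = −A + u·C, C' = −u·B for a constant control u, and suppose A ≡ 0 on a nonempty open interval while 1 + C + u·A ≡ 0 there (vanishing Hamiltonian). Then on that interval C ≡ −1 and u = 0. -/
theorem singular_arc_is_geodesic (u a b : ℝ) (hab : a < b) (A B C : ℝ → ℝ)
    (hA : ∀ s ∈ Set.Ioo a b, HasDerivAt A (B s) s)
    (hB : ∀ s ∈ Set.Ioo a b, HasDerivAt B (-A s + u * C s) s)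
    (hC : ∀ s ∈ Set.Ioo a b, HasDerivAt C (-(u * B s)) s)
    (hA0 : ∀ s ∈ Set.Ioo a b, A s = 0)
    (hH : ∀ s ∈ Set.Ioo a b, 1 + C s + u * A s = 0) :
    (∀ s ∈ Set.Ioo a b, C s = -1) ∧ u = 0 := by
  have hCval : ∀ s ∈ Set.Ioo a b, C s = -1 := by
    intro s hs
    have := hH s hs
    rw [hA0 s hs] at this
    linarith
  refine ⟨hCval, ?_⟩
  have hopen : IsOpen (Set.Ioo a b) := isOpen_Ioo
  have hB0 : ∀ s ∈ Set.Ioo a b, B s = 0 := by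
    intro s hs
    have h0 : HasDerivAt A 0 s := by
      have hev : A =ᶠ[nhds s] fun _ => (0 : ℝ) :=
        Filter.eventuallyEq_of_mem (hopen.mem_nhds hs) hA0
      exact (hasDerivAt_const s (0 : ℝ)).congr_of_eventuallyEq hev
    exact ((hA s hs).unique h0)
  set s0 := (a + b) / 2 with hs0def
  have hs0 : s0 ∈ Set.Ioo a b := ⟨by linarith, by linarith⟩
  have h0 : HasDerivAt B 0 s0 := by
    have hev : B =ᶠ[nhds s0] fun _ => (0 : ℝ) :=
      Filter.eventuallyEq_of_mem (hopen.mem_nhds hs0) hB0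
    exact (hasDerivAt_const s0 (0 : ℝ)).congr_of_eventuallyEq hev
  have := (hB s0 hs0).unique h0
  rw [hA0 s0 hs0, hCval s0 hs0] at this
  linarith
end

section
/- Let k₃ be a unit vector in ℝ³, and let v, w ∈ ℝ³ satisfy ⟨k₃, v⟩ = ⟨k₃, w⟩ and ‖v‖ = ‖w‖. Suppose the projections v₀ = v − k₃⟨k₃,v⟩ and w₀ = w − k₃⟨k₃,w⟩ are nonzero. Then there exists θ ∈ ℝ such that R(k₃,θ) v = w, and θ may be chosen as the signed angle φ with cos φ = ⟨v̂₀, ŵ₀⟩ and sin φ = ⟨k₃, v̂₀ × ŵ₀⟩, where v̂₀ = v₀/‖v₀‖ and ŵ₀ = w₀/‖w₀‖. -/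
open Matrix Real

noncomputable def skew (k : Fin 3 → ℝ) : Matrix (Fin 3) (Fin 3) ℝ :=
  !![0, -k 2, k 1; k 2, 0, -k 0; -k 1, k 0, 0]

noncomputable def Rrot (k : Fin 3 → ℝ) (θ : ℝ) : Matrix (Fin 3) (Fin 3) ℝ :=
  1 + Real.sin θ • skew k + (1 - Real.cos θ) • (skew k * skew k)

lemma bac_cab (a b c : Fin 3 → ℝ) :
    crossProduct a (crossProduct b c) = (a ⬝ᵥ c) • b - (a ⬝ᵥ b) • c := by
  funext i
  fin_cases i <;>
    simp [cross_apply, dotProduct, Fin.sum_univ_three] <;> ring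

lemma skew_mulVec (k u : Fin 3 → ℝ) : (skew k).mulVec u = crossProduct k u := by
  funext i
  fin_cases i <;>
    simp [skew, cross_apply, mulVec, dotProduct, Fin.sum_univ_three] <;> ring

lemma exists_cos_sin (c s : ℝ) (h : c ^ 2 + s ^ 2 = 1) :
    ∃ θ : ℝ, Real.cos θ = c ∧ Real.sin θ = s := by
  have hc1 : -1 ≤ c := by nlinarith [sq_nonneg s]
  have hc2 : c ≤ 1 := by nlinarith [sq_nonneg s]
  have hsin : Real.sin (Real.arccos c) = |s| := by
    rw [Real.sin_arccos]
    have h' : 1 - c ^ 2 = s ^ 2 := by linarith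
    rw [h', Real.sqrt_sq_eq_abs]
  rcases le_or_gt 0 s with hs | hs
  · exact ⟨Real.arccos c, Real.cos_arccos hc1 hc2, by rw [hsin, abs_of_nonneg hs]⟩
  · exact ⟨-Real.arccos c, by rw [Real.cos_neg, Real.cos_arccos hc1 hc2],
      by rw [Real.sin_neg, hsin, abs_of_neg hs]; ring⟩

lemma dot_self_nonneg' (x : Fin 3 → ℝ) : 0 ≤ x ⬝ᵥ x :=
  Finset.sum_nonneg fun i _ => mul_self_nonneg (x i)

theorem back_substitution_angle (k₃ v w : Fin 3 → ℝ) (hk : k₃ ⬝ᵥ k₃ = 1)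
    (hdot : k₃ ⬝ᵥ v = k₃ ⬝ᵥ w) (hnorm : v ⬝ᵥ v = w ⬝ᵥ w)
    (hv0 : v - (k₃ ⬝ᵥ v) • k₃ ≠ 0) (hw0 : w - (k₃ ⬝ᵥ w) • k₃ ≠ 0) :
    ∃ θ : ℝ, (Rrot k₃ θ).mulVec v = w ∧
      (let v₀ := v - (k₃ ⬝ᵥ v) • k₃
       let w₀ := w - (k₃ ⬝ᵥ w) • k₃
       let vhat := (Real.sqrt (v₀ ⬝ᵥ v₀))⁻¹ • v₀
       let what := (Real.sqrt (w₀ ⬝ᵥ w₀))⁻¹ • w₀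
       Real.cos θ = vhat ⬝ᵥ what ∧ Real.sin θ = k₃ ⬝ᵥ crossProduct vhat what) := by
  set a := k₃ ⬝ᵥ v with ha
  set v₀ := v - a • k₃ with hv₀
  set w₀ := w - (k₃ ⬝ᵥ w) • k₃ with hw₀
  have hw₀' : w₀ = w - a • k₃ := by rw [hw₀, ← hdot]
  -- orthogonality
  have hkv₀ : k₃ ⬝ᵥ v₀ = 0 := by
    rw [hv₀, dotProduct_sub, dotProduct_smul, hk]; simp [ha]
  have hkw₀ : k₃ ⬝ᵥ w₀ = 0 := by
    rw [hw₀', dotProduct_sub, dotProduct_smul, hk]; simp [hdot, ← ha]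
  -- norms of the projections agree
  have hv₀v₀ : v₀ ⬝ᵥ v₀ = v ⬝ᵥ v - a * a := by
    rw [hv₀]
    simp only [dotProduct_sub, sub_dotProduct, dotProduct_smul, smul_dotProduct,
      smul_eq_mul, hk]
    rw [dotProduct_comm v k₃, ← ha]
    ring
  have hw₀w₀ : w₀ ⬝ᵥ w₀ = w ⬝ᵥ w - a * a := by
    rw [hw₀']
    simp only [dotProduct_sub, sub_dotProduct, dotProduct_smul, smul_dotProduct,
      smul_eq_mul, hk]
    rw [dotProduct_comm w k₃, ← hdot]
    ring
  have hvw0 : v₀ ⬝ᵥ v₀ = w₀ ⬝ᵥ w₀ := by rw [hv₀v₀, hw₀w₀, hnorm]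
  set r2 := v₀ ⬝ᵥ v₀ with hr2
  have hr2pos : 0 < r2 := by
    rcases (dot_self_nonneg' v₀).lt_or_eq with h | h
    · exact h
    · exact absurd (dotProduct_self_eq_zero.mp h.symm) hv0
  have hr2ne : r2 ≠ 0 := ne_of_gt hr2pos
  set c' := v₀ ⬝ᵥ w₀ with hc'
  set s' := k₃ ⬝ᵥ crossProduct v₀ w₀ with hs'
  -- the cross product v₀ ×₃ w₀ is parallel to k₃
  have hx : crossProduct v₀ w₀ = s' • k₃ := by
    have h2 : crossProduct k₃ (crossProduct v₀ w₀) = 0 := by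
      rw [bac_cab, hkv₀, hkw₀]; simp
    have h1 := bac_cab k₃ k₃ (crossProduct v₀ w₀)
    rw [h2] at h1
    simp only [map_zero, hk, one_smul, ← hs'] at h1
    exact (sub_eq_zero.mp h1.symm).symm
  -- Pythagorean identity
  have key : c' ^ 2 + s' ^ 2 = r2 ^ 2 := by
    have hxx : crossProduct v₀ w₀ ⬝ᵥ crossProduct v₀ w₀ =
        r2 * r2 - c' * c' := by
      rw [cross_dot_cross, ← hvw0, ← hr2, ← hc', dotProduct_comm w₀ v₀, ← hc']
    rw [hx] at hxx
    simp only [smul_dotProduct, dotProduct_smul, smul_eq_mul, hk] at hxx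
    nlinarith [hxx]
  -- the rotation coefficients
  have hcs : (r2⁻¹ * c') ^ 2 + (r2⁻¹ * s') ^ 2 = 1 := by
    field_simp
    linear_combination key
  obtain ⟨θ, hθc, hθs⟩ := exists_cos_sin (r2⁻¹ * c') (r2⁻¹ * s') hcs
  -- main vector identity : r2 • w₀ = c' • v₀ + s' • (k₃ × v₀)
  have hmain : r2 • w₀ = c' • v₀ + s' • crossProduct k₃ v₀ := by
    have h1 : crossProduct v₀ (crossProduct v₀ w₀) = c' • v₀ - r2 • w₀ :=
      bac_cab v₀ v₀ w₀
    rw [hx] at h1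
    have h2 : crossProduct v₀ (s' • k₃) = -(s' • crossProduct k₃ v₀) := by
      rw [_root_.map_smul, ← cross_anticomm, smul_neg]
    rw [h2] at h1
    calc r2 • w₀ = c' • v₀ - (c' • v₀ - r2 • w₀) := by module
      _ = c' • v₀ - -(s' • crossProduct k₃ v₀) := by rw [← h1]
      _ = c' • v₀ + s' • crossProduct k₃ v₀ := by module
  have hsq : (Real.sqrt r2)⁻¹ * (Real.sqrt r2)⁻¹ = r2⁻¹ := by
    rw [← mul_inv, Real.mul_self_sqrt hr2pos.le]
  refine ⟨θ, ?_, ?_, ?_⟩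
  · -- rotation maps v to w
    have hR : (Rrot k₃ θ).mulVec v =
        v + Real.sin θ • crossProduct k₃ v +
          (1 - Real.cos θ) • crossProduct k₃ (crossProduct k₃ v) := by
      rw [Rrot, add_mulVec, add_mulVec, one_mulVec, smul_mulVec,
        smul_mulVec, ← mulVec_mulVec, skew_mulVec, skew_mulVec]
    have hv' : v = v₀ + a • k₃ := by rw [hv₀]; abel
    have hw' : w = w₀ + a • k₃ := by rw [hw₀']; abel
    have hkv : crossProduct k₃ v = crossProduct k₃ v₀ := by
      rw [hv', map_add, _root_.map_smul, cross_self, smul_zero, add_zero]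
    have hkkv : crossProduct k₃ (crossProduct k₃ v₀) = -v₀ := by
      rw [bac_cab, hkv₀, hk]; simp
    rw [hR, hkv, hkkv, hθc, hθs, hv', hw']
    have hw₀eq : w₀ = r2⁻¹ • (c' • v₀ + s' • crossProduct k₃ v₀) := by
      rw [← hmain, smul_smul, inv_mul_cancel₀ hr2ne, one_smul]
    rw [hw₀eq]
    module
  · -- cosine formula
    show Real.cos θ =
      ((Real.sqrt (v₀ ⬝ᵥ v₀))⁻¹ • v₀) ⬝ᵥ ((Real.sqrt (w₀ ⬝ᵥ w₀))⁻¹ • w₀)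
    rw [← hvw0, ← hr2, smul_dotProduct, dotProduct_smul, smul_eq_mul, smul_eq_mul,
      ← hc', hθc, ← mul_assoc, hsq]
  · -- sine formula
    show Real.sin θ =
      k₃ ⬝ᵥ crossProduct ((Real.sqrt (v₀ ⬝ᵥ v₀))⁻¹ • v₀) ((Real.sqrt (w₀ ⬝ᵥ w₀))⁻¹ • w₀)
    rw [← hvw0, ← hr2, LinearMap.map_smul₂, _root_.map_smul, smul_smul,
      dotProduct_smul, smul_eq_mul, ← hs', hθs, hsq]
end
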